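/- Fix non-negative integers v1', v2' with 0 < v1' + v2' ≤ b. Then J1 = J2, where J1 = Σ_{0 ≤ v1 ≤ v1', 0 ≤ v2 ≤ v2'} (−1)^{v1+v2} v^{(v1'+v2'−1)(v1−v2)} [b choose v1][b choose v2][b−v2'−v1 choose v1'−v1][b−v1'−v2 choose v2'−v2] and J2 is the analogous sum with [b choose v1][b choose v2] replaced by [b choose v1−1][b choose v2−1]. -/

import Mathlib

noncomputable section

/-- The indeterminate `v`. -/
def v : RatFunc ℚ := RatFunc.X

/-- Quantum integer `[r] = (v^r - v^{-r})/(v - v⁻¹)`. -/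
def qint (r : ℤ) : RatFunc ℚ := (v ^ r - v ^ (-r)) / (v - v⁻¹)

/-- Quantum factorial `[n]!`. -/
def qfact (n : ℕ) : RatFunc ℚ := ∏ i ∈ Finset.range n, qint ((i : ℤ) + 1)

/-- Gaussian binomial coefficient `[m choose r]`, zero for `r < 0`. -/
def qbinom (m r : ℤ) : RatFunc ℚ :=
  if r < 0 then 0
  else (∏ i ∈ Finset.range r.toNat, qint (m - (i : ℤ))) / qfact r.toNat

lemma v_ne_zero : v ≠ 0 := RatFunc.X_ne_zero

lemma v_pow_ne_one {n : ℕ} (hn : n ≠ 0) : v ^ (n : ℤ) ≠ 1 := by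
  intro h
  rw [zpow_natCast] at h
  have : (RatFunc.X : RatFunc ℚ) ^ n = RatFunc.C 1 := by simpa [v] using h
  have h2 : (Polynomial.X : Polynomial ℚ) ^ n = Polynomial.C 1 := by
    apply RatFunc.algebraMap_injective ℚ |>.eq_iff.mp ?_
    · simpa [RatFunc.algebraMap_X, RatFunc.algebraMap_C] using this
  have := congrArg Polynomial.natDegree h2
  simp [Polynomial.natDegree_X_pow] at this
  exact hn this

lemma sub_inv_ne_zero : v - v⁻¹ ≠ 0 := by
  intro h
  have h1 : v * v - 1 = 0 := by
    have := congrArg (· * v) h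
    field_simp at this
    rw [sub_eq_zero]
    rw [sub_eq_zero] at h
    have := congrArg (· * v) h
    simpa [inv_mul_cancel₀ v_ne_zero] using this.symm.symm
  have : v ^ (2 : ℤ) = 1 := by
    rw [sub_eq_zero] at h1
    rw [zpow_two]; exact h1
  exact v_pow_ne_one (by norm_num) this

lemma qint_zero : qint 0 = 0 := by simp [qint]

lemma qint_neg (r : ℤ) : qint (-r) = - qint r := by
  rw [qint, qint, neg_neg, ← neg_div, neg_sub]

lemma qint_ne_zero {r : ℤ} (h : r ≠ 0) : qint r ≠ 0 := by
  have key : ∀ s : ℤ, 0 < s → qint s ≠ 0 := by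
    intro s hs hz
    rw [qint, div_eq_zero_iff] at hz
    rcases hz with hz | hz
    · rw [sub_eq_zero] at hz
      have : v ^ (2 * s) = 1 := by
        have := congrArg (· * v ^ s) hz
        simp only [← zpow_add₀ v_ne_zero] at this
        simpa [two_mul] using this
      have h2 : ((2 * s).toNat : ℤ) = 2 * s := Int.toNat_of_nonneg (by omega)
      exact v_pow_ne_one (n := (2*s).toNat) (by omega) (by rw [h2]; exact this)
    · exact sub_inv_ne_zero hz
  rcases lt_or_gt_of_ne h with h' | h'
  · intro hz
    have := key (-r) (by omega)
    rw [qint_neg] at this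
    exact this (by rw [hz, neg_zero])
  · exact key r h'

lemma qfact_ne_zero (n : ℕ) : qfact n ≠ 0 := by
  rw [qfact]
  apply Finset.prod_ne_zero_iff.mpr
  intro i _
  exact qint_ne_zero (by omega)

lemma qint_split (m r : ℤ) : qint m = v ^ (-r) * qint (m - r) + v ^ (m - r) * qint r := by
  rw [qint, qint, qint, ← mul_div_assoc, ← mul_div_assoc, ← add_div]
  congr 1
  rw [mul_sub, mul_sub, ← zpow_add₀ v_ne_zero, ← zpow_add₀ v_ne_zero,
    ← zpow_add₀ v_ne_zero, ← zpow_add₀ v_ne_zero]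
  rw [show -r + (m - r) = m - 2*r by ring, show m - r + r = m by ring,
    show -r + -(m - r) = -m by ring, show m - r + -r = m - 2*r by ring]
  ring

lemma qbinom_neg {m r : ℤ} (h : r < 0) : qbinom m r = 0 := by simp [qbinom, h]

lemma qbinom_zero (m : ℤ) : qbinom m 0 = 1 := by simp [qbinom, qfact]

lemma qbinom_nat (m : ℤ) (k : ℕ) :
    qbinom m k = (∏ i ∈ Finset.range k, qint (m - (i : ℤ))) / qfact k := by
  simp [qbinom]

lemma qfact_succ (k : ℕ) : qfact (k + 1) = qfact k * qint (k + 1) := by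
  rw [qfact, qfact, Finset.prod_range_succ]

lemma qbinom_pascal (m r : ℤ) :
    qbinom m r = v ^ (-r) * qbinom (m - 1) r + v ^ (m - r) * qbinom (m - 1) (r - 1) := by
  rcases lt_trichotomy r 0 with hr | hr | hr
  · rw [qbinom_neg hr, qbinom_neg hr, qbinom_neg (by omega), mul_zero, mul_zero, add_zero]
  · subst hr
    rw [qbinom_zero, qbinom_zero, qbinom_neg (by omega)]
    simp
  · -- r ≥ 1
    obtain ⟨k, rfl⟩ : ∃ k : ℕ, r = (k : ℤ) + 1 := ⟨(r - 1).toNat, by omega⟩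
    have qn1 : ∀ m' : ℤ, qbinom m' ((k:ℤ)+1)
        = (∏ i ∈ Finset.range (k+1), qint (m' - (i : ℤ))) / qfact (k+1) := by
      intro m'
      rw [show ((k:ℤ)+1) = ((k+1:ℕ):ℤ) by push_cast; ring, qbinom_nat]
    rw [show (k:ℤ) + 1 - 1 = ((k:ℕ):ℤ) by ring, qn1, qn1, qbinom_nat]
    have hP1 : ∏ i ∈ Finset.range (k+1), qint (m - (i : ℤ))
        = (∏ i ∈ Finset.range k, qint ((m - 1) - (i : ℤ))) * qint m := by
      rw [Finset.prod_range_succ']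
      congr 1
      · apply Finset.prod_congr rfl
        intro i _
        congr 1
        push_cast; ring
      · congr 1; ring
    have hP2 : ∏ i ∈ Finset.range (k+1), qint ((m - 1) - (i : ℤ))
        = (∏ i ∈ Finset.range k, qint ((m - 1) - (i : ℤ))) * qint (m - ((k:ℤ)+1)) := by
      rw [Finset.prod_range_succ]
      congr 1
      push_cast; ring
    set P := ∏ i ∈ Finset.range k, qint ((m - 1) - (i : ℤ)) with hP
    rw [hP1, hP2, qfact_succ]
    have hf : qfact k ≠ 0 := qfact_ne_zero k
    have hq : qint ((k : ℤ) + 1) ≠ 0 := qint_ne_zero (by omega)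
    rw [qint_split m ((k : ℤ) + 1)]
    field_simp

lemma qbinom_reflect (m : ℤ) (k : ℕ) :
    qbinom m (k : ℤ) = (-1) ^ k * qbinom ((k : ℤ) - m - 1) (k : ℤ) := by
  rw [qbinom_nat, qbinom_nat]
  have : ∏ i ∈ Finset.range k, qint (m - (i : ℤ))
      = (-1 : RatFunc ℚ) ^ k * ∏ i ∈ Finset.range k, qint (((k : ℤ) - m - 1) - (i : ℤ)) := by
    calc ∏ i ∈ Finset.range k, qint (m - (i : ℤ))
        = ∏ i ∈ Finset.range k, qint (m - ((k - 1 - i : ℕ) : ℤ)) := by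
          rw [Finset.prod_range_reflect (fun i => qint (m - (i : ℤ))) k]
      _ = ∏ i ∈ Finset.range k, (-1 : RatFunc ℚ) * qint (((k : ℤ) - m - 1) - (i : ℤ)) := by
          apply Finset.prod_congr rfl
          intro i hi
          rw [Finset.mem_range] at hi
          rw [neg_one_mul, ← qint_neg]
          congr 1
          omega
      _ = (-1 : RatFunc ℚ) ^ k * ∏ i ∈ Finset.range k, qint (((k : ℤ) - m - 1) - (i : ℤ)) := by
          rw [Finset.prod_mul_distrib, Finset.prod_const, Finset.card_range]
  rw [this, mul_div_assoc]

lemma qbinom_eq_zero {n : ℤ} {k : ℕ} (h0 : 0 ≤ n) (h : n < (k : ℤ)) : qbinom n (k : ℤ) = 0 := by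
  rw [qbinom_nat, div_eq_zero_iff]
  left
  apply Finset.prod_eq_zero (i := n.toNat)
  · rw [Finset.mem_range]; omega
  · rw [show n - (n.toNat : ℤ) = 0 by omega, qint_zero]

lemma qfact_eq_prod (n : ℕ) : qfact n = ∏ i ∈ Finset.range n, qint ((n : ℤ) - (i : ℤ)) := by
  rw [qfact, ← Finset.prod_range_reflect]
  apply Finset.prod_congr rfl
  intro i hi
  rw [Finset.mem_range] at hi
  congr 1
  omega

lemma qbinom_symm (n r : ℕ) (h : r ≤ n) :
    qbinom (n : ℤ) (r : ℤ) = qbinom (n : ℤ) ((n - r : ℕ) : ℤ) := by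
  rw [qbinom_nat, qbinom_nat]
  have hsplit : ∀ s t : ℕ, (∏ i ∈ Finset.range (s + t), qint (((s+t : ℕ) : ℤ) - (i : ℤ)))
      = (∏ i ∈ Finset.range s, qint (((s+t:ℕ) : ℤ) - (i : ℤ))) * qfact t := by
    intro s t
    rw [Finset.prod_range_add]
    congr 1
    rw [qfact, ← Finset.prod_range_reflect]
    apply Finset.prod_congr rfl
    intro i hi
    rw [Finset.mem_range] at hi
    congr 1
    push_cast
    omega
  have h1 := hsplit r (n - r)
  have h2 := hsplit (n - r) r
  rw [show r + (n - r) = n by omega] at h1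
  rw [show (n - r) + r = n by omega] at h2
  have key : (∏ i ∈ Finset.range r, qint ((n : ℤ) - (i : ℤ))) * qfact (n - r)
      = (∏ i ∈ Finset.range (n - r), qint ((n : ℤ) - (i : ℤ))) * qfact r := by
    rw [← h1, ← h2]
  have hf1 : qfact r ≠ 0 := qfact_ne_zero r
  have hf2 : qfact (n - r) ≠ 0 := qfact_ne_zero (n - r)
  field_simp
  linear_combination key

/-- The Vandermonde-type sum. -/
def Vsum (n : ℕ) (b d : ℤ) : RatFunc ℚ :=
  ∑ x ∈ Finset.range (n + 1),
    v ^ (d * (x : ℤ) - b * ((n : ℤ) - (x : ℤ))) * qbinom b (x : ℤ) * qbinom d ((n : ℤ) - (x : ℤ))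

lemma vsum_rec (m : ℕ) (b d : ℤ) :
    Vsum (m + 1) (b + 1) d
      = v ^ (-((m : ℤ) + 1)) * Vsum (m + 1) b d + v ^ (b + d - (m : ℤ)) * Vsum m b d := by
  have hv := v_ne_zero
  rw [Vsum, Vsum, Vsum, Finset.mul_sum, Finset.mul_sum]
  have expand : ∀ x ∈ Finset.range (m + 1 + 1),
      v ^ (d * (x : ℤ) - (b+1) * (((m+1 : ℕ) : ℤ) - (x : ℤ))) * qbinom (b+1) (x : ℤ)
        * qbinom d (((m+1:ℕ) : ℤ) - (x : ℤ))
      = (v ^ (-((m : ℤ) + 1)) * (v ^ (d * (x : ℤ) - b * (((m+1:ℕ) : ℤ) - (x : ℤ)))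
            * qbinom b (x : ℤ) * qbinom d (((m+1:ℕ) : ℤ) - (x : ℤ))))
        + v ^ (d * (x:ℤ) - (b+1) * (((m+1:ℕ):ℤ) - (x:ℤ)) + (b + 1 - (x:ℤ)))
            * qbinom b ((x:ℤ) - 1) * qbinom d (((m+1:ℕ) : ℤ) - (x : ℤ)) := by
    intro x _
    rw [qbinom_pascal (b+1) (x : ℤ), show b + 1 - 1 = b by ring]
    have h1 : v ^ (d * (x : ℤ) - (b+1) * (((m+1:ℕ) : ℤ) - (x : ℤ))) * v ^ (-(x:ℤ))
        = v ^ (-((m : ℤ) + 1)) * v ^ (d * (x : ℤ) - b * (((m+1:ℕ) : ℤ) - (x : ℤ))) := by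
      rw [← zpow_add₀ hv, ← zpow_add₀ hv]
      congr 1
      push_cast
      ring
    have h2 : v ^ (d * (x : ℤ) - (b+1) * (((m+1:ℕ) : ℤ) - (x : ℤ))) * v ^ (b + 1 - (x:ℤ))
        = v ^ (d * (x:ℤ) - (b+1) * (((m+1:ℕ):ℤ) - (x:ℤ)) + (b + 1 - (x:ℤ))) :=
      (zpow_add₀ hv _ _).symm
    linear_combination (qbinom b (x:ℤ) * qbinom d (((m+1:ℕ):ℤ) - (x:ℤ))) * h1
      + (qbinom b ((x:ℤ) - 1) * qbinom d (((m+1:ℕ):ℤ) - (x:ℤ))) * h2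
  rw [Finset.sum_congr rfl expand, Finset.sum_add_distrib]
  congr 1
  -- second sum: shift index
  rw [Finset.sum_range_succ']
  have h0 : v ^ (d * ((0:ℕ) : ℤ) - (b+1) * (((m+1:ℕ):ℤ) - ((0:ℕ):ℤ)) + (b + 1 - ((0:ℕ):ℤ)))
      * qbinom b (((0:ℕ):ℤ) - 1) * qbinom d (((m+1:ℕ) : ℤ) - ((0:ℕ) : ℤ)) = 0 := by
    rw [qbinom_neg (by norm_num : ((0:ℕ):ℤ) - 1 < 0)]
    ring
  rw [h0, add_zero]
  apply Finset.sum_congr rfl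
  intro x hx
  rw [show (((x+1:ℕ)):ℤ) - 1 = (x : ℤ) by push_cast; ring]
  rw [show ((m+1:ℕ):ℤ) - ((x+1:ℕ):ℤ) = (m:ℤ) - (x:ℤ) by push_cast; ring]
  rw [show d * ((x+1:ℕ):ℤ) - (b+1) * ((m:ℤ) - (x:ℤ)) + (b + 1 - ((x+1:ℕ):ℤ))
      = (b + d - (m:ℤ)) + (d * (x:ℤ) - b * ((m:ℤ) - (x:ℤ))) by push_cast; ring]
  rw [zpow_add₀ hv]
  ring

lemma vandermonde (n : ℕ) : ∀ b d : ℤ, Vsum n b d = qbinom (b + d) (n : ℤ) := by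
  induction n using Nat.strong_induction_on with
  | _ n ih =>
    match n with
    | 0 =>
      intro b d
      rw [Vsum]
      simp [qbinom_zero]
    | (m + 1) =>
      have base : ∀ d : ℤ, Vsum (m+1) 0 d = qbinom (0 + d) ((m+1 : ℕ) : ℤ) := by
        intro d
        rw [Vsum, Finset.sum_eq_single 0]
        · simp [qbinom_zero]
        · intro x hx hx0
          have hx1 : 1 ≤ x := Nat.one_le_iff_ne_zero.mpr hx0
          rw [qbinom_eq_zero (le_refl 0) (by exact_mod_cast hx1)]
          ring
        · intro h
          exact absurd (Finset.mem_range.mpr (by omega)) h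
      have step : ∀ b d : ℤ, Vsum (m+1) b d = qbinom (b + d) ((m+1:ℕ) : ℤ)
          → Vsum (m+1) (b+1) d = qbinom (b + 1 + d) ((m+1:ℕ) : ℤ) := by
        intro b d hP
        rw [vsum_rec, hP, ih m (by omega)]
        rw [qbinom_pascal (b+1+d) ((m+1:ℕ):ℤ)]
        rw [show b + 1 + d - 1 = b + d by ring]
        rw [show ((m+1:ℕ):ℤ) - 1 = (m : ℤ) by push_cast; ring]
        rw [show (-(((m+1:ℕ)):ℤ)) = -((m:ℤ)+1) by push_cast; ring]
        rw [show b + 1 + d - ((m+1:ℕ):ℤ) = b + d - (m:ℤ) by push_cast; ring]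
      intro b d
      induction b using Int.induction_on with
      | zero => exact base d
      | succ k hk => exact step k d hk
      | pred k hk =>
        have hrec := vsum_rec m (-(k:ℤ) - 1) d
        rw [show (-(k:ℤ) - 1) + 1 = -(k:ℤ) by ring, hk, ih m (by omega)] at hrec
        rw [qbinom_pascal (-(k:ℤ) + d) ((m+1:ℕ):ℤ),
          show -(k:ℤ) + d - 1 = -(k:ℤ) - 1 + d by ring,
          show ((m+1:ℕ):ℤ) - 1 = (m : ℤ) by push_cast; ring,
          show -(k:ℤ) + d - ((m+1:ℕ):ℤ) = -(k:ℤ) - 1 + d - (m:ℤ) by push_cast; ring] at hrec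
        rw [show -((m:ℤ)+1) = (-(((m+1:ℕ)):ℤ)) by push_cast; ring] at hrec
        have hz : v ^ (-(((m+1:ℕ)):ℤ)) ≠ 0 := zpow_ne_zero _ v_ne_zero
        exact (mul_left_cancel₀ hz (add_right_cancel hrec)).symm

lemma sumGen (b d : ℤ) (n : ℕ) :
    ∑ x ∈ Finset.range (n + 1),
        v ^ ((b + d) * (x : ℤ)) * qbinom b (x : ℤ) * qbinom d ((n : ℤ) - (x : ℤ))
      = v ^ ((n : ℤ) * b) * qbinom (b + d) (n : ℤ) := by
  rw [← vandermonde n b d, Vsum, Finset.mul_sum]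
  apply Finset.sum_congr rfl
  intro x _
  rw [show (b + d) * (x:ℤ) = ((n:ℤ) * b) + (d * (x:ℤ) - b * ((n:ℤ) - (x:ℤ))) by ring,
    zpow_add₀ v_ne_zero]
  ring

lemma sumA (b : ℤ) (w1 w2 : ℕ) :
    ∑ x ∈ Finset.range (w1 + 1),
        (-1 : RatFunc ℚ) ^ x * v ^ (((w1 : ℤ) + (w2 : ℤ) - 1) * (x : ℤ)) * qbinom b (x : ℤ) *
          qbinom (b - (w2 : ℤ) - (x : ℤ)) ((w1 : ℤ) - (x : ℤ))
      = (-1 : RatFunc ℚ) ^ w1 * v ^ ((w1 : ℤ) * b) * qbinom ((w1 : ℤ) + (w2 : ℤ) - 1) (w1 : ℤ) := by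
  set d : ℤ := (w1 : ℤ) + (w2 : ℤ) - 1 - b with hd
  have key : ∀ x ∈ Finset.range (w1 + 1),
      (-1 : RatFunc ℚ) ^ x * v ^ (((w1 : ℤ) + (w2 : ℤ) - 1) * (x : ℤ)) * qbinom b (x : ℤ) *
          qbinom (b - (w2 : ℤ) - (x : ℤ)) ((w1 : ℤ) - (x : ℤ))
      = (-1 : RatFunc ℚ) ^ w1 *
          (v ^ ((b + d) * (x : ℤ)) * qbinom b (x : ℤ) * qbinom d ((w1 : ℤ) - (x : ℤ))) := by
    intro x hx
    rw [Finset.mem_range] at hx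
    have hxle : x ≤ w1 := by omega
    have hc : (w1 : ℤ) - (x : ℤ) = ((w1 - x : ℕ) : ℤ) := by omega
    rw [hc, qbinom_reflect (b - (w2:ℤ) - (x:ℤ)) (w1 - x),
      show ((w1 - x : ℕ) : ℤ) - (b - (w2:ℤ) - (x:ℤ)) - 1 = d by omega,
      show b + d = (w1:ℤ) + (w2:ℤ) - 1 by rw [hd]; ring]
    rw [show ((-1 : RatFunc ℚ) ^ w1) = (-1 : RatFunc ℚ) ^ x * (-1 : RatFunc ℚ) ^ (w1 - x) by
      rw [← pow_add, show x + (w1 - x) = w1 by omega]]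
    ring
  rw [Finset.sum_congr rfl key, ← Finset.mul_sum, sumGen b d w1,
    show b + d = (w1:ℤ) + (w2:ℤ) - 1 by rw [hd]; ring]
  ring

lemma sumB (b : ℤ) (w1 w2 : ℕ) :
    ∑ y ∈ Finset.range (w2 + 1),
        (-1 : RatFunc ℚ) ^ y * v ^ (-(((w1 : ℤ) + (w2 : ℤ) - 1) * (y : ℤ))) * qbinom b (y : ℤ) *
          qbinom (b - (w1 : ℤ) - (y : ℤ)) ((w2 : ℤ) - (y : ℤ))
      = (-1 : RatFunc ℚ) ^ w2 * v ^ (-((w2 : ℤ) * b)) *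
          qbinom ((w1 : ℤ) + (w2 : ℤ) - 1) (w2 : ℤ) := by
  set d : ℤ := (w1 : ℤ) + (w2 : ℤ) - 1 - b with hd
  set K : ℤ := (w1 : ℤ) + (w2 : ℤ) - 1 with hK
  have key : ∀ y ∈ Finset.range (w2 + 1),
      (-1 : RatFunc ℚ) ^ y * v ^ (-(K * (y : ℤ))) * qbinom b (y : ℤ) *
          qbinom (b - (w1 : ℤ) - (y : ℤ)) ((w2 : ℤ) - (y : ℤ))
      = (-1 : RatFunc ℚ) ^ w2 *
          (v ^ (-(K * (y:ℤ))) * qbinom b (y : ℤ) * qbinom d ((w2 : ℤ) - (y : ℤ))) := by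
    intro y hy
    rw [Finset.mem_range] at hy
    have hc : (w2 : ℤ) - (y : ℤ) = ((w2 - y : ℕ) : ℤ) := by omega
    rw [hc, qbinom_reflect (b - (w1:ℤ) - (y:ℤ)) (w2 - y),
      show ((w2 - y : ℕ) : ℤ) - (b - (w1:ℤ) - (y:ℤ)) - 1 = d by omega]
    rw [show ((-1 : RatFunc ℚ) ^ w2) = (-1 : RatFunc ℚ) ^ y * (-1 : RatFunc ℚ) ^ (w2 - y) by
      rw [← pow_add, show y + (w2 - y) = w2 by omega]]
    ring
  rw [Finset.sum_congr rfl key, ← Finset.mul_sum, mul_assoc]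
  congr 1
  -- reflect the sum
  rw [← Finset.sum_range_reflect]
  have key2 : ∀ y ∈ Finset.range (w2 + 1),
      v ^ (-(K * ((w2 + 1 - 1 - y : ℕ) : ℤ))) * qbinom b ((w2 + 1 - 1 - y : ℕ) : ℤ) *
          qbinom d ((w2 : ℤ) - ((w2 + 1 - 1 - y : ℕ) : ℤ))
      = v ^ (-((w2:ℤ) * b)) * v ^ ((w2:ℤ) * b + -(K * (w2:ℤ))) *
          (v ^ ((d + b) * (y : ℤ)) * qbinom d (y : ℤ) * qbinom b ((w2 : ℤ) - (y : ℤ))) := by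
    intro y hy
    rw [Finset.mem_range] at hy
    have h1 : ((w2 + 1 - 1 - y : ℕ) : ℤ) = (w2 : ℤ) - (y : ℤ) := by omega
    rw [h1, show (w2:ℤ) - ((w2:ℤ) - (y:ℤ)) = (y:ℤ) by ring,
      show -(K * ((w2:ℤ) - (y:ℤ)))
        = (-((w2:ℤ)*b) + ((w2:ℤ)*b + -(K * (w2:ℤ)))) + (d + b) * (y:ℤ) by rw [hd, hK]; ring,
      zpow_add₀ v_ne_zero, zpow_add₀ v_ne_zero]
    ring
  rw [Finset.sum_congr rfl key2, ← Finset.mul_sum, sumGen d b w2,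
    show d + b = K by rw [hd, hK]; ring]
  have hone : v ^ ((w2:ℤ)*b + -(K * (w2:ℤ))) * v ^ ((w2:ℤ) * d) = 1 := by
    rw [← zpow_add₀ v_ne_zero, show (w2:ℤ)*b + -(K * (w2:ℤ)) + (w2:ℤ) * d = 0 by
      rw [hd, hK]; ring, zpow_zero]
  linear_combination (v ^ (-((w2:ℤ)*b)) * qbinom K (w2:ℤ)) * hone

lemma sumA2 (b : ℤ) (w1 w2 : ℕ) :
    ∑ x ∈ Finset.range (w1 + 1),
        (-1 : RatFunc ℚ) ^ x * v ^ (((w1 : ℤ) + (w2 : ℤ) - 1) * (x : ℤ)) *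
          qbinom b ((x : ℤ) - 1) *
          qbinom (b - (w2 : ℤ) - (x : ℤ)) ((w1 : ℤ) - (x : ℤ))
      = (-1 : RatFunc ℚ) ^ w1 * v ^ (((w1 : ℤ) + (w2 : ℤ) - 1) + ((w1 : ℤ) - 1) * b) *
          qbinom ((w1 : ℤ) + (w2 : ℤ) - 1) ((w1 : ℤ) - 1) := by
  set K : ℤ := (w1 : ℤ) + (w2 : ℤ) - 1 with hK
  match w1 with
  | 0 =>
    rw [Finset.range_one, Finset.sum_singleton, qbinom_neg (by norm_num : ((0:ℕ):ℤ) - 1 < 0),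
      qbinom_neg (by norm_num : ((0:ℕ):ℤ) - 1 < 0)]
    ring
  | (w + 1) =>
    rw [Finset.sum_range_succ']
    rw [show ((-1 : RatFunc ℚ) ^ (0:ℕ) * v ^ (K * ((0:ℕ) : ℤ)) * qbinom b (((0:ℕ):ℤ) - 1) *
        qbinom (b - (w2 : ℤ) - ((0:ℕ):ℤ)) (((w+1:ℕ) : ℤ) - ((0:ℕ):ℤ))) = 0 by
      rw [qbinom_neg (by norm_num : ((0:ℕ):ℤ) - 1 < 0)]; ring, add_zero]
    have key : ∀ x ∈ Finset.range (w + 1),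
        (-1 : RatFunc ℚ) ^ (x+1) * v ^ (K * ((x+1:ℕ) : ℤ)) * qbinom b (((x+1:ℕ):ℤ) - 1) *
          qbinom (b - (w2 : ℤ) - ((x+1:ℕ):ℤ)) (((w+1:ℕ) : ℤ) - ((x+1:ℕ):ℤ))
        = (- v ^ K) * ((-1 : RatFunc ℚ) ^ x * v ^ (((w : ℤ) + ((w2+1:ℕ) : ℤ) - 1) * (x : ℤ)) *
            qbinom b (x : ℤ) * qbinom (b - ((w2+1:ℕ) : ℤ) - (x : ℤ)) ((w : ℤ) - (x : ℤ))) := by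
      intro x _
      rw [show (((x+1:ℕ):ℤ) - 1) = (x:ℤ) by push_cast; ring,
        show b - (w2 : ℤ) - ((x+1:ℕ):ℤ) = b - ((w2+1:ℕ) : ℤ) - (x : ℤ) by push_cast; ring,
        show ((w+1:ℕ) : ℤ) - ((x+1:ℕ):ℤ) = (w : ℤ) - (x : ℤ) by push_cast; ring,
        show K * ((x+1:ℕ) : ℤ) = K + ((w : ℤ) + ((w2+1:ℕ) : ℤ) - 1) * (x : ℤ) by
          rw [hK]; push_cast; ring,
        zpow_add₀ v_ne_zero, pow_succ]
      ring
    rw [Finset.sum_congr rfl key, ← Finset.mul_sum, sumA b w (w2+1),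
      show ((w : ℤ) + ((w2+1:ℕ) : ℤ) - 1) = K by rw [hK]; push_cast; ring,
      show (((w+1:ℕ)):ℤ) - 1 = ((w:ℕ) : ℤ) by push_cast; ring,
      zpow_add₀ v_ne_zero K ((w:ℤ) * b), pow_succ]
    ring

lemma sumB2 (b : ℤ) (w1 w2 : ℕ) :
    ∑ y ∈ Finset.range (w2 + 1),
        (-1 : RatFunc ℚ) ^ y * v ^ (-(((w1 : ℤ) + (w2 : ℤ) - 1) * (y : ℤ))) *
          qbinom b ((y : ℤ) - 1) *
          qbinom (b - (w1 : ℤ) - (y : ℤ)) ((w2 : ℤ) - (y : ℤ))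
      = (-1 : RatFunc ℚ) ^ w2 * v ^ (-(((w1 : ℤ) + (w2 : ℤ) - 1) + ((w2 : ℤ) - 1) * b)) *
          qbinom ((w1 : ℤ) + (w2 : ℤ) - 1) ((w2 : ℤ) - 1) := by
  set K : ℤ := (w1 : ℤ) + (w2 : ℤ) - 1 with hK
  match w2 with
  | 0 =>
    rw [Finset.range_one, Finset.sum_singleton, qbinom_neg (by norm_num : ((0:ℕ):ℤ) - 1 < 0),
      qbinom_neg (by norm_num : ((0:ℕ):ℤ) - 1 < 0)]
    ring
  | (w + 1) =>
    rw [Finset.sum_range_succ']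
    rw [show ((-1 : RatFunc ℚ) ^ (0:ℕ) * v ^ (-(K * ((0:ℕ) : ℤ))) * qbinom b (((0:ℕ):ℤ) - 1) *
        qbinom (b - (w1 : ℤ) - ((0:ℕ):ℤ)) (((w+1:ℕ) : ℤ) - ((0:ℕ):ℤ))) = 0 by
      rw [qbinom_neg (by norm_num : ((0:ℕ):ℤ) - 1 < 0)]; ring, add_zero]
    have key : ∀ y ∈ Finset.range (w + 1),
        (-1 : RatFunc ℚ) ^ (y+1) * v ^ (-(K * ((y+1:ℕ) : ℤ))) * qbinom b (((y+1:ℕ):ℤ) - 1) *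
          qbinom (b - (w1 : ℤ) - ((y+1:ℕ):ℤ)) (((w+1:ℕ) : ℤ) - ((y+1:ℕ):ℤ))
        = (- v ^ (-K)) * ((-1 : RatFunc ℚ) ^ y *
            v ^ (-((((w1+1:ℕ) : ℤ) + (w : ℤ) - 1) * (y : ℤ))) *
            qbinom b (y : ℤ) * qbinom (b - ((w1+1:ℕ) : ℤ) - (y : ℤ)) ((w : ℤ) - (y : ℤ))) := by
      intro y _
      rw [show (((y+1:ℕ):ℤ) - 1) = (y:ℤ) by push_cast; ring,
        show b - (w1 : ℤ) - ((y+1:ℕ):ℤ) = b - ((w1+1:ℕ) : ℤ) - (y : ℤ) by push_cast; ring,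
        show ((w+1:ℕ) : ℤ) - ((y+1:ℕ):ℤ) = (w : ℤ) - (y : ℤ) by push_cast; ring,
        show -(K * ((y+1:ℕ) : ℤ)) = -K + -((((w1+1:ℕ) : ℤ) + (w : ℤ) - 1) * (y : ℤ)) by
          rw [hK]; push_cast; ring,
        zpow_add₀ v_ne_zero, pow_succ]
      ring
    rw [Finset.sum_congr rfl key, ← Finset.mul_sum, sumB b (w1+1) w,
      show (((w1+1:ℕ) : ℤ) + (w : ℤ) - 1) = K by rw [hK]; push_cast; ring,
      show (((w+1:ℕ)):ℤ) - 1 = ((w:ℕ) : ℤ) by push_cast; ring,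
      show -(K + ((w:ℤ)) * b) = -K + -((w:ℤ) * b) by ring,
      zpow_add₀ v_ne_zero, pow_succ]
    ring

lemma binom_pair (w1 w2 : ℕ) (hpos : 0 < w1 + w2) :
    qbinom ((w1:ℤ) + (w2:ℤ) - 1) (w1 : ℤ) * qbinom ((w1:ℤ) + (w2:ℤ) - 1) (w2 : ℤ)
      = qbinom ((w1:ℤ) + (w2:ℤ) - 1) ((w1 : ℤ) - 1) *
        qbinom ((w1:ℤ) + (w2:ℤ) - 1) ((w2 : ℤ) - 1) := by
  have hn : (w1:ℤ) + (w2:ℤ) - 1 = ((w1 + w2 - 1 : ℕ) : ℤ) := by omega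
  rw [hn]
  set n : ℕ := w1 + w2 - 1 with hdefn
  match w1, w2 with
  | 0, w2 =>
    have hw2 : 1 ≤ w2 := by omega
    rw [qbinom_neg (by norm_num : ((0:ℕ):ℤ) - 1 < 0),
      qbinom_eq_zero (by positivity) (by omega : ((n:ℕ):ℤ) < (w2:ℤ))]
    ring
  | (a+1), 0 =>
    rw [qbinom_neg (by norm_num : ((0:ℕ):ℤ) - 1 < 0),
      qbinom_eq_zero (n := ((n:ℕ):ℤ)) (by positivity) (by omega : ((n:ℕ):ℤ) < ((a+1:ℕ):ℤ))]
    ring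
  | (a+1), (c+1) =>
    have h1 : qbinom (n:ℤ) ((a+1:ℕ):ℤ) = qbinom (n:ℤ) ((n - (a+1) : ℕ) : ℤ) :=
      qbinom_symm n (a+1) (by omega)
    have h2 : qbinom (n:ℤ) ((c+1:ℕ):ℤ) = qbinom (n:ℤ) ((n - (c+1) : ℕ) : ℤ) :=
      qbinom_symm n (c+1) (by omega)
    rw [h1, h2, show ((n - (a+1) : ℕ) : ℤ) = ((c+1:ℕ):ℤ) - 1 by omega,
      show ((n - (c+1) : ℕ) : ℤ) = ((a+1:ℕ):ℤ) - 1 by omega]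
    ring

/-- The double sum `J₁` of the paper (for parameters `b`, `w₁`, `w₂`). -/
def J1 (b : ℤ) (w1 w2 : ℕ) : RatFunc ℚ :=
  ∑ x ∈ Finset.range (w1 + 1), ∑ y ∈ Finset.range (w2 + 1),
    (-1 : RatFunc ℚ) ^ (x + y) * v ^ (((w1 : ℤ) + (w2 : ℤ) - 1) * ((x : ℤ) - (y : ℤ))) *
      qbinom b (x : ℤ) * qbinom b (y : ℤ) *
      qbinom (b - (w2 : ℤ) - (x : ℤ)) ((w1 : ℤ) - (x : ℤ)) *
      qbinom (b - (w1 : ℤ) - (y : ℤ)) ((w2 : ℤ) - (y : ℤ))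

/-- The double sum `J₂`, with `[b choose x][b choose y]` replaced by
`[b choose x−1][b choose y−1]`. -/
def J2 (b : ℤ) (w1 w2 : ℕ) : RatFunc ℚ :=
  ∑ x ∈ Finset.range (w1 + 1), ∑ y ∈ Finset.range (w2 + 1),
    (-1 : RatFunc ℚ) ^ (x + y) * v ^ (((w1 : ℤ) + (w2 : ℤ) - 1) * ((x : ℤ) - (y : ℤ))) *
      qbinom b ((x : ℤ) - 1) * qbinom b ((y : ℤ) - 1) *
      qbinom (b - (w2 : ℤ) - (x : ℤ)) ((w1 : ℤ) - (x : ℤ)) *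
      qbinom (b - (w1 : ℤ) - (y : ℤ)) ((w2 : ℤ) - (y : ℤ))


/-- for 0 < w1 + w2 <= b (with b >= 1), J1 = J2. -/
theorem J1_eq_J2 (b : ℤ) (hb : 1 ≤ b) (w1 w2 : ℕ) (hpos : 0 < w1 + w2)
    (hle : (w1 : ℤ) + (w2 : ℤ) ≤ b) :
    J1 b w1 w2 = J2 b w1 w2 := by
  set K : ℤ := (w1 : ℤ) + (w2 : ℤ) - 1 with hK
  have e1 : J1 b w1 w2
      = ((-1 : RatFunc ℚ) ^ w1 * v ^ ((w1:ℤ) * b) * qbinom K (w1:ℤ))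
        * ((-1 : RatFunc ℚ) ^ w2 * v ^ (-((w2:ℤ) * b)) * qbinom K (w2:ℤ)) := by
    rw [← sumA b w1 w2, ← sumB b w1 w2, J1, Finset.sum_mul_sum]
    refine Finset.sum_congr rfl fun x _ => Finset.sum_congr rfl fun y _ => ?_
    rw [pow_add, show K * ((x:ℤ) - (y:ℤ)) = K * (x:ℤ) + (-(K * (y:ℤ))) by ring,
      zpow_add₀ v_ne_zero]
    ring
  have e2 : J2 b w1 w2
      = ((-1 : RatFunc ℚ) ^ w1 * v ^ (K + ((w1:ℤ) - 1) * b) * qbinom K ((w1:ℤ) - 1))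
        * ((-1 : RatFunc ℚ) ^ w2 * v ^ (-(K + ((w2:ℤ) - 1) * b)) * qbinom K ((w2:ℤ) - 1)) := by
    rw [← sumA2 b w1 w2, ← sumB2 b w1 w2, J2, Finset.sum_mul_sum]
    refine Finset.sum_congr rfl fun x _ => Finset.sum_congr rfl fun y _ => ?_
    rw [pow_add, show K * ((x:ℤ) - (y:ℤ)) = K * (x:ℤ) + (-(K * (y:ℤ))) by ring,
      zpow_add₀ v_ne_zero]
    ring
  have hv1 : v ^ ((w1:ℤ) * b) * v ^ (-((w2:ℤ) * b))
      = v ^ (K + ((w1:ℤ) - 1) * b) * v ^ (-(K + ((w2:ℤ) - 1) * b)) := by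
    rw [← zpow_add₀ v_ne_zero, ← zpow_add₀ v_ne_zero]
    congr 1
    ring
  have hbp := binom_pair w1 w2 hpos
  rw [e1, e2]
  linear_combination ((-1 : RatFunc ℚ) ^ w1 * (-1 : RatFunc ℚ) ^ w2 *
      (qbinom K (w1:ℤ) * qbinom K (w2:ℤ))) * hv1
    + ((-1 : RatFunc ℚ) ^ w1 * (-1 : RatFunc ℚ) ^ w2 *
      (v ^ (K + ((w1:ℤ) - 1) * b) * v ^ (-(K + ((w2:ℤ) - 1) * b)))) * hbp
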